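/- Let p, q > 0 be coprime integers. In the ring M(p,q), the residue class of X − 1 is a unit, and the residue class of X^q − 1 is a unit. -/

import Mathlib

/-- The ring `M(p,q) = (ℤ/qℤ)[X] / (1 + X + ⋯ + X^{p-1})`. -/
abbrev Mpq (p q : ℕ) : Type :=
  Polynomial (ZMod q) ⧸
    Ideal.span {∑ i ∈ Finset.range p, (Polynomial.X : Polynomial (ZMod q)) ^ i}

/-- If `gcd(p,q) = 1`, then the classes of `X - 1` and of `X^q - 1` are units in `M(p,q)`. -/
theorem isUnit_X_sub_one_and_X_pow_q_sub_one (p q : ℕ) (hp : 0 < p) (hq : 0 < q)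
    (hpq : Nat.Coprime p q) :
    IsUnit (Ideal.Quotient.mk
        (Ideal.span {∑ i ∈ Finset.range p, (Polynomial.X : Polynomial (ZMod q)) ^ i})
        (Polynomial.X - 1)) ∧
    IsUnit (Ideal.Quotient.mk
        (Ideal.span {∑ i ∈ Finset.range p, (Polynomial.X : Polynomial (ZMod q)) ^ i})
        (Polynomial.X ^ q - 1)) := by
  set I : Ideal (Polynomial (ZMod q)) :=
    Ideal.span {∑ i ∈ Finset.range p, (Polynomial.X : Polynomial (ZMod q)) ^ i} with hI
  set φ := Ideal.Quotient.mk I with hφ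
  set x : Mpq p q := φ Polynomial.X with hx
  -- the geometric sum vanishes in the quotient
  have hS : (∑ i ∈ Finset.range p, x ^ i) = 0 := by
    have : φ (∑ i ∈ Finset.range p, (Polynomial.X : Polynomial (ZMod q)) ^ i) = 0 := by
      rw [Ideal.Quotient.eq_zero_iff_mem]
      exact Ideal.subset_span (Set.mem_singleton _)
    simpa [map_sum, map_pow] using this
  -- x^p = 1
  have hxp : x ^ p = 1 := by
    have h := geom_sum_mul x p
    rw [hS, zero_mul] at h
    exact sub_eq_zero.mp h.symm
  -- p is a unit in the quotient
  haveI : NeZero q := ⟨hq.ne'⟩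
  have hpu : IsUnit ((p : ℕ) : Mpq p q) := by
    have h1 : IsUnit ((p : ℕ) : ZMod q) := (ZMod.isUnit_iff_coprime p q).mpr hpq
    have := h1.map (algebraMap (ZMod q) (Mpq p q))
    rwa [map_natCast] at this
  -- x - 1 divides p
  have hdvd : (x - 1) ∣ ((p : ℕ) : Mpq p q) := by
    have h1 : (x - 1) ∣ ∑ i ∈ Finset.range p, (x ^ i - 1) := by
      refine Finset.dvd_sum fun i _ => ?_
      simpa using sub_dvd_pow_sub_pow x 1 i
    have h2 : ∑ i ∈ Finset.range p, (x ^ i - 1) = -((p : ℕ) : Mpq p q) := by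
      rw [Finset.sum_sub_distrib, hS]
      simp
    rw [h2] at h1
    exact (dvd_neg).mp h1
  have hunit1 : IsUnit (x - 1) := isUnit_of_dvd_unit hdvd hpu
  refine ⟨hunit1, ?_⟩
  -- find k, m with q * k = 1 + p * m
  obtain ⟨k, m, hkm⟩ : ∃ k m : ℕ, q * k = 1 + p * m := by
    rcases eq_or_lt_of_le (show 1 ≤ p from hp) with hp1 | hp1
    · subst hp1; exact ⟨1, q - 1, by omega⟩
    · obtain ⟨k, hk⟩ := Nat.exists_mul_mod_eq_one_of_coprime hpq.symm hp1
      have h := Nat.div_add_mod (q * k) p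
      exact ⟨k, q * k / p, by omega⟩
  have hdvd2 : (x ^ q - 1) ∣ (x - 1) := by
    have h := sub_dvd_pow_sub_pow (x ^ q) 1 k
    rw [one_pow, ← pow_mul, hkm, pow_add, pow_mul, hxp, one_pow, mul_one, pow_one] at h
    exact h
  exact isUnit_of_dvd_unit hdvd2 hunit1
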